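/- Let P = conv{(0,0,0,0,0,0), e₁, e₂, e₃, e₄, e₅, e₁ + e₂ + 999e₅ + 1000e₆} ⊂ ℝ⁶, where e_i denotes the i-th standard unit vector of ℝ⁶. Then for every positive integer n, the number of lattice points in nP equals (25/18)n⁶ + (751/60)n⁵ + (2515/72)n⁴ + (131/6)n³ − (2435/72)n² − (617/20)n + 1. -/

import Mathlib

open Pointwise

@[simp] lemma vec6_0 {α : Type*} (a b c d e f : α) : ![a,b,c,d,e,f] 0 = a := rfl
@[simp] lemma vec6_1 {α : Type*} (a b c d e f : α) : ![a,b,c,d,e,f] 1 = b := rfl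
@[simp] lemma vec6_2 {α : Type*} (a b c d e f : α) : ![a,b,c,d,e,f] 2 = c := rfl
@[simp] lemma vec6_3 {α : Type*} (a b c d e f : α) : ![a,b,c,d,e,f] 3 = d := rfl
@[simp] lemma vec6_4 {α : Type*} (a b c d e f : α) : ![a,b,c,d,e,f] 4 = e := rfl
@[simp] lemma vec6_5 {α : Type*} (a b c d e f : α) : ![a,b,c,d,e,f] 5 = f := rfl
@[simp] lemma vec7_0 {α : Type*} (a b c d e f g : α) : ![a,b,c,d,e,f,g] 0 = a := rfl
@[simp] lemma vec7_1 {α : Type*} (a b c d e f g : α) : ![a,b,c,d,e,f,g] 1 = b := rfl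
@[simp] lemma vec7_2 {α : Type*} (a b c d e f g : α) : ![a,b,c,d,e,f,g] 2 = c := rfl
@[simp] lemma vec7_3 {α : Type*} (a b c d e f g : α) : ![a,b,c,d,e,f,g] 3 = d := rfl
@[simp] lemma vec7_4 {α : Type*} (a b c d e f g : α) : ![a,b,c,d,e,f,g] 4 = e := rfl
@[simp] lemma vec7_5 {α : Type*} (a b c d e f g : α) : ![a,b,c,d,e,f,g] 5 = f := rfl
@[simp] lemma vec7_6 {α : Type*} (a b c d e f g : α) : ![a,b,c,d,e,f,g] 6 = g := rfl

abbrev Vset : Set (Fin 6 → ℝ) :=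
  {![0, 0, 0, 0, 0, 0], ![1, 0, 0, 0, 0, 0], ![0, 1, 0, 0, 0, 0],
    ![0, 0, 1, 0, 0, 0], ![0, 0, 0, 1, 0, 0], ![0, 0, 0, 0, 1, 0],
    ![1, 1, 0, 0, 999, 1000]}

def good (n : ℕ) (x : Fin 6 → ℤ) : Prop :=
  0 ≤ x 5 ∧ x 5 ≤ 1000 * x 0 ∧ x 5 ≤ 1000 * x 1 ∧ 0 ≤ x 2 ∧ 0 ≤ x 3 ∧
    999 * x 5 ≤ 1000 * x 4 ∧ x 0 + x 1 + x 2 + x 3 + x 4 - x 5 ≤ (n : ℤ)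

def Hs : Set (Fin 6 → ℝ) :=
  {w | 0 ≤ w 5 ∧ w 5 ≤ 1000 * w 0 ∧ w 5 ≤ 1000 * w 1 ∧ 0 ≤ w 2 ∧ 0 ≤ w 3 ∧
    999 * w 5 ≤ 1000 * w 4 ∧ w 0 + w 1 + w 2 + w 3 + w 4 - w 5 ≤ 1}

lemma convex_Hs : Convex ℝ Hs := by
  intro p hp q hq a b ha hb hab
  obtain ⟨h1,h2,h3,h4,h5,h6,h7⟩ := hp
  obtain ⟨g1,g2,g3,g4,g5,g6,g7⟩ := hq
  refine ⟨?_,?_,?_,?_,?_,?_,?_⟩ <;>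
    simp only [Pi.add_apply, Pi.smul_apply, smul_eq_mul] <;> nlinarith

lemma V_sub_Hs : Vset ⊆ Hs := by
  intro v hv
  simp only [Vset, Set.mem_insert_iff, Set.mem_singleton_iff] at hv
  rcases hv with h|h|h|h|h|h|h <;> subst h <;>
    refine ⟨?_,?_,?_,?_,?_,?_,?_⟩ <;> norm_num

lemma mem_iff (n : ℕ) (hn : 0 < n) (x : Fin 6 → ℤ) :
    ((fun i => (x i : ℝ)) ∈ (n : ℝ) • convexHull ℝ Vset) ↔ good n x := by
  have hN : (0:ℝ) < (n:ℝ) := by exact_mod_cast hn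
  constructor
  · rintro ⟨w, hw, hwx⟩
    have hwH := convexHull_min V_sub_Hs convex_Hs hw
    obtain ⟨h1,h2,h3,h4,h5,h6,h7⟩ := hwH
    have e : ∀ i, (x i : ℝ) = (n:ℝ) * w i := by
      intro i
      have := congrFun hwx i
      simp only [Pi.smul_apply, smul_eq_mul] at this
      exact this.symm
    refine ⟨?_,?_,?_,?_,?_,?_,?_⟩
    · have : (0:ℝ) ≤ (x 5 : ℝ) := by rw [e 5]; positivity
      exact_mod_cast this
    · have : (x 5 : ℝ) ≤ 1000 * (x 0 : ℝ) := by
        rw [e 5, e 0]; nlinarith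
      exact_mod_cast this
    · have : (x 5 : ℝ) ≤ 1000 * (x 1 : ℝ) := by
        rw [e 5, e 1]; nlinarith
      exact_mod_cast this
    · have : (0:ℝ) ≤ (x 2 : ℝ) := by rw [e 2]; positivity
      exact_mod_cast this
    · have : (0:ℝ) ≤ (x 3 : ℝ) := by rw [e 3]; positivity
      exact_mod_cast this
    · have : 999 * (x 5 : ℝ) ≤ 1000 * (x 4 : ℝ) := by
        rw [e 5, e 4]; nlinarith
      exact_mod_cast this
    · have : (x 0 : ℝ) + x 1 + x 2 + x 3 + x 4 - x 5 ≤ (n:ℝ) := by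
        rw [e 0, e 1, e 2, e 3, e 4, e 5]; nlinarith
      have h2 : ((x 0 + x 1 + x 2 + x 3 + x 4 - x 5 : ℤ) : ℝ) ≤ ((n:ℤ) : ℝ) := by
        push_cast; linarith
      exact_mod_cast h2
  · rintro ⟨h1,h2,h3,h4,h5,h6,h7⟩
    rw [Set.mem_smul_set_iff_inv_smul_mem₀ (ne_of_gt hN)]
    set N := (n:ℝ) with hNdef
    have c1 : (0:ℝ) ≤ (x 5 : ℝ) := by exact_mod_cast h1
    have c2 : (x 5 : ℝ) ≤ 1000 * x 0 := by exact_mod_cast h2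
    have c3 : (x 5 : ℝ) ≤ 1000 * x 1 := by exact_mod_cast h3
    have c4 : (0:ℝ) ≤ (x 2 : ℝ) := by exact_mod_cast h4
    have c5 : (0:ℝ) ≤ (x 3 : ℝ) := by exact_mod_cast h5
    have c6 : 999 * (x 5 : ℝ) ≤ 1000 * x 4 := by exact_mod_cast h6
    have c7 : (x 0 : ℝ) + x 1 + x 2 + x 3 + x 4 - x 5 ≤ N := by
      have : ((x 0 + x 1 + x 2 + x 3 + x 4 - x 5 : ℤ) : ℝ) ≤ ((n : ℤ) : ℝ) := by exact_mod_cast h7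
      push_cast at this; linarith
    set w : Fin 7 → ℝ :=
      ![(N - ((x 0 : ℝ) + x 1 + x 2 + x 3 + x 4 - x 5)) / N,
        (1000 * (x 0 : ℝ) - x 5) / (1000 * N),
        (1000 * (x 1 : ℝ) - x 5) / (1000 * N),
        (x 2 : ℝ) / N, (x 3 : ℝ) / N,
        (1000 * (x 4 : ℝ) - 999 * x 5) / (1000 * N),
        (x 5 : ℝ) / (1000 * N)] with hwdef
    set v : Fin 7 → (Fin 6 → ℝ) :=
      ![![0, 0, 0, 0, 0, 0], ![1, 0, 0, 0, 0, 0], ![0, 1, 0, 0, 0, 0],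
        ![0, 0, 1, 0, 0, 0], ![0, 0, 0, 1, 0, 0], ![0, 0, 0, 0, 1, 0],
        ![1, 1, 0, 0, 999, 1000]] with hvdef
    have ex0 : ∀ h, x (⟨0, h⟩ : Fin 6) = x 0 := fun _ => rfl
    have ex1 : ∀ h, x (⟨1, h⟩ : Fin 6) = x 1 := fun _ => rfl
    have ex2 : ∀ h, x (⟨2, h⟩ : Fin 6) = x 2 := fun _ => rfl
    have ex3 : ∀ h, x (⟨3, h⟩ : Fin 6) = x 3 := fun _ => rfl
    have ex4 : ∀ h, x (⟨4, h⟩ : Fin 6) = x 4 := fun _ => rfl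
    have ex5 : ∀ h, x (⟨5, h⟩ : Fin 6) = x 5 := fun _ => rfl
    have key : (N⁻¹ • fun i => (x i : ℝ)) = ∑ j : Fin 7, w j • v j := by
      funext i
      fin_cases i <;>
        simp only [Fin.sum_univ_seven, hwdef, hvdef, Pi.smul_apply, Pi.add_apply,
          smul_eq_mul, vec6_0, vec6_1, vec6_2, vec6_3, vec6_4, vec6_5,
          vec7_0, vec7_1, vec7_2, vec7_3, vec7_4, vec7_5, vec7_6, ex0, ex1, ex2, ex3, ex4, ex5, Matrix.cons_val_succ', Matrix.cons_val_zero'] <;>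
        field_simp <;> ring
    rw [key]
    refine (convex_convexHull ℝ Vset).sum_mem ?_ ?_ ?_
    · intro j _
      fin_cases j <;>
        simp only [hwdef, vec7_0, vec7_1, vec7_2, vec7_3, vec7_4, vec7_5, vec7_6] <;>
        apply div_nonneg <;> linarith
    · rw [Fin.sum_univ_seven]
      simp only [hwdef, vec7_0, vec7_1, vec7_2, vec7_3, vec7_4, vec7_5, vec7_6]
      field_simp
      ring
    · intro j _
      apply subset_convexHull
      fin_cases j <;> simp [hvdef, Vset]

abbrev ZS (M : ℕ) := {z : Fin 6 → ℕ // ∑ i, z i = M}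
abbrev OmA (n : ℕ) := Σ q : Fin (n+1), ZS (n - q)
abbrev OmB (n : ℕ) := Σ q : Fin (n-1), Fin 999 × ZS (n - 2 - q)

def fA (n : ℕ) (ω : OmA n) : Fin 6 → ℤ :=
  ![(ω.2.1 1 : ℤ) + (ω.1 : ℕ), (ω.2.1 2 : ℤ) + (ω.1 : ℕ), (ω.2.1 3 : ℤ), (ω.2.1 4 : ℤ),
    (ω.2.1 5 : ℤ) + 999 * (ω.1 : ℕ), 1000 * ((ω.1 : ℕ) : ℤ)]

def fB (n : ℕ) (ω : OmB n) : Fin 6 → ℤ :=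
  ![(ω.2.2.1 1 : ℤ) + (ω.1 : ℕ) + 1, (ω.2.2.1 2 : ℤ) + (ω.1 : ℕ) + 1, (ω.2.2.1 3 : ℤ),
    (ω.2.2.1 4 : ℤ), (ω.2.2.1 5 : ℤ) + 999 * (ω.1 : ℕ) + ((ω.2.1 : ℕ) + 1),
    1000 * ((ω.1 : ℕ) : ℤ) + ((ω.2.1 : ℕ) + 1)]

def fF (n : ℕ) : OmA n ⊕ OmB n → (Fin 6 → ℤ) := Sum.elim (fA n) (fB n)

lemma funext6 {α : Type*} {f g : Fin 6 → α} (h0 : f 0 = g 0) (h1 : f 1 = g 1)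
    (h2 : f 2 = g 2) (h3 : f 3 = g 3) (h4 : f 4 = g 4) (h5 : f 5 = g 5) : f = g := by
  funext i; fin_cases i
  exacts [h0, h1, h2, h3, h4, h5]

lemma sum6 (z : Fin 6 → ℕ) : ∑ i, z i = z 0 + z 1 + z 2 + z 3 + z 4 + z 5 := by
  rw [Fin.sum_univ_six]

lemma good_fF (n : ℕ) (ω : OmA n ⊕ OmB n) : good n (fF n ω) := by
  rcases ω with ⟨q, z, hz⟩ | ⟨q, r, z, hz⟩
  · have hq := q.isLt
    rw [sum6] at hz
    refine ⟨?_,?_,?_,?_,?_,?_,?_⟩ <;>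
      simp only [fF, fA, Sum.elim_inl, vec6_0, vec6_1, vec6_2, vec6_3, vec6_4, vec6_5] <;>
      omega
  · have hq := q.isLt
    have hr := r.isLt
    rw [sum6] at hz
    refine ⟨?_,?_,?_,?_,?_,?_,?_⟩ <;>
      simp only [fF, fB, Sum.elim_inr, vec6_0, vec6_1, vec6_2, vec6_3, vec6_4, vec6_5] <;>
      omega

lemma fF_inj (n : ℕ) : Function.Injective (fF n) := by
  intro a b h
  have h0 := congrFun h 0
  have h1 := congrFun h 1
  have h2 := congrFun h 2
  have h3 := congrFun h 3
  have h4 := congrFun h 4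
  have h5 := congrFun h 5
  rcases a with ⟨q₁, z₁, hz₁⟩ | ⟨q₁, r₁, z₁, hz₁⟩ <;>
    rcases b with ⟨q₂, z₂, hz₂⟩ | ⟨q₂, r₂, z₂, hz₂⟩ <;>
    simp only [fF, fA, fB, Sum.elim_inl, Sum.elim_inr, vec6_0, vec6_1, vec6_2, vec6_3,
      vec6_4, vec6_5] at h0 h1 h2 h3 h4 h5
  · have hq := q₁.isLt; have hq' := q₂.isLt
    rw [sum6] at hz₁ hz₂
    have eq : (q₁ : ℕ) = (q₂ : ℕ) := by omega
    have : q₁ = q₂ := Fin.ext eq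
    subst this
    have e1 : z₁ 1 = z₂ 1 := by omega
    have e2 : z₁ 2 = z₂ 2 := by omega
    have e3 : z₁ 3 = z₂ 3 := by omega
    have e4 : z₁ 4 = z₂ 4 := by omega
    have e5 : z₁ 5 = z₂ 5 := by omega
    have e0 : z₁ 0 = z₂ 0 := by omega
    have : z₁ = z₂ := by
      funext i; fin_cases i
      · exact e0
      · exact e1
      · exact e2
      · exact e3
      · exact e4
      · exact e5
    subst this
    rfl
  · exfalso; have hr := r₂.isLt; omega
  · exfalso; have hr := r₁.isLt; omega
  · have hq := q₁.isLt; have hq' := q₂.isLt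
    have hr := r₁.isLt; have hr' := r₂.isLt
    rw [sum6] at hz₁ hz₂
    have eq : (q₁ : ℕ) = (q₂ : ℕ) := by omega
    have : q₁ = q₂ := Fin.ext eq
    subst this
    have er : (r₁ : ℕ) = (r₂ : ℕ) := by omega
    have : r₁ = r₂ := Fin.ext er
    subst this
    have e1 : z₁ 1 = z₂ 1 := by omega
    have e2 : z₁ 2 = z₂ 2 := by omega
    have e3 : z₁ 3 = z₂ 3 := by omega
    have e4 : z₁ 4 = z₂ 4 := by omega
    have e5 : z₁ 5 = z₂ 5 := by omega
    have e0 : z₁ 0 = z₂ 0 := by omega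
    have : z₁ = z₂ := by
      funext i; fin_cases i
      · exact e0
      · exact e1
      · exact e2
      · exact e3
      · exact e4
      · exact e5
    subst this
    rfl

lemma fF_surj (n : ℕ) (hn : 0 < n) (x : Fin 6 → ℤ) (hx : good n x) :
    ∃ ω, fF n ω = x := by
  obtain ⟨h1, h2, h3, h4, h5, h6, h7⟩ := hx
  obtain ⟨m, hm⟩ : ∃ m : ℕ, (m : ℤ) = x 5 := ⟨(x 5).toNat, Int.toNat_of_nonneg h1⟩
  obtain ⟨q, r, hqr, hrlt⟩ : ∃ q r, 1000 * q + r = m ∧ r < 1000 :=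
    ⟨m / 1000, m % 1000, Nat.div_add_mod m 1000, Nat.mod_lt _ (by norm_num)⟩
  by_cases hr0 : r = 0
  · subst hr0
    have hx0 : (q:ℤ) ≤ x 0 := by omega
    have hx1 : (q:ℤ) ≤ x 1 := by omega
    have hx4 : 999 * (q:ℤ) ≤ x 4 := by omega
    refine ⟨Sum.inl ⟨⟨q, by omega⟩,
      ⟨![n - q - (((x 0).toNat - q) + ((x 1).toNat - q) + (x 2).toNat + (x 3).toNat
          + ((x 4).toNat - 999*q)),
        (x 0).toNat - q, (x 1).toNat - q, (x 2).toNat, (x 3).toNat, (x 4).toNat - 999*q],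
       ?_⟩⟩, ?_⟩
    · rw [sum6]
      simp only [vec6_0, vec6_1, vec6_2, vec6_3, vec6_4, vec6_5, Fin.val_mk]
      omega
    · refine funext6 ?_ ?_ ?_ ?_ ?_ ?_ <;>
        simp only [fF, fA, Sum.elim_inl, vec6_0, vec6_1, vec6_2, vec6_3, vec6_4, vec6_5,
          Fin.val_mk] <;> push_cast <;> omega
  · have hr1 : 1 ≤ r := by omega
    have hx0 : (q:ℤ) + 1 ≤ x 0 := by omega
    have hx1 : (q:ℤ) + 1 ≤ x 1 := by omega
    have hx4 : 999 * (q:ℤ) + r ≤ x 4 := by omega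
    refine ⟨Sum.inr ⟨⟨q, by omega⟩, ⟨r - 1, by omega⟩,
      ⟨![n - 2 - q - (((x 0).toNat - q - 1) + ((x 1).toNat - q - 1) + (x 2).toNat
          + (x 3).toNat + ((x 4).toNat - 999*q - r)),
        (x 0).toNat - q - 1, (x 1).toNat - q - 1, (x 2).toNat, (x 3).toNat,
        (x 4).toNat - 999*q - r],
       ?_⟩⟩, ?_⟩
    · rw [sum6]
      simp only [vec6_0, vec6_1, vec6_2, vec6_3, vec6_4, vec6_5, Fin.val_mk]
      omega
    · refine funext6 ?_ ?_ ?_ ?_ ?_ ?_ <;>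
        simp only [fF, fB, Sum.elim_inr, vec6_0, vec6_1, vec6_2, vec6_3, vec6_4, vec6_5,
          Fin.val_mk] <;> push_cast <;> omega

lemma card_sym6 (M : ℕ) : Fintype.card (Sym (Fin 6) M) = (M + 5).choose 5 := by
  rw [Sym.card_sym_eq_choose, Fintype.card_fin]
  have h : 6 + M - 1 = M + 5 := by omega
  have h2 := Nat.choose_symm (Nat.le_add_right M 5)
  have h3 : M + 5 - M = 5 := by omega
  rw [h3] at h2
  rw [h, ← h2]

lemma hockey (m : ℕ) : ∑ j ∈ Finset.range m, (j + 5).choose 5 = (m + 5).choose 6 := by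
  induction m with
  | zero => simp [Nat.choose_eq_zero_of_lt]
  | succ k ih =>
    rw [Finset.sum_range_succ, ih]
    have h : (k+6).choose 6 = (k+5).choose 5 + (k+5).choose 6 := Nat.choose_succ_succ (k+5) 5
    have e : (k+1+5).choose 6 = (k+6).choose 6 := by norm_num
    omega

lemma sum_reflect5 (m : ℕ) :
    ∑ q ∈ Finset.range m, ((m - 1 - q) + 5).choose 5 = (m + 5).choose 6 := by
  rw [← hockey m, Finset.sum_range_reflect (fun j => (j + 5).choose 5) m]

lemma card_OmA (n : ℕ) : Nat.card (OmA n) = (n + 6).choose 6 := by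
  have e : OmA n ≃ Σ q : Fin (n+1), Sym (Fin 6) (n - q) :=
    Equiv.sigmaCongrRight fun q => (Sym.equivNatSumOfFintype (Fin 6) (n - (q:ℕ))).symm
  rw [Nat.card_congr e, Nat.card_eq_fintype_card, Fintype.card_sigma]
  simp only [card_sym6]
  rw [Fin.sum_univ_eq_sum_range (fun q => ((n - q) + 5).choose 5) (n+1)]
  have : ∀ q ∈ Finset.range (n+1), ((n - q) + 5).choose 5 = ((n + 1 - 1 - q) + 5).choose 5 := by
    intro q hq
    have e : n - q = n + 1 - 1 - q := by omega
    rw [e]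
  rw [Finset.sum_congr rfl this, sum_reflect5]

lemma card_OmB (n : ℕ) (hn : 0 < n) : Nat.card (OmB n) = 999 * (n + 4).choose 6 := by
  have e : OmB n ≃ Σ q : Fin (n-1), Fin 999 × Sym (Fin 6) (n - 2 - q) :=
    Equiv.sigmaCongrRight fun q =>
      Equiv.prodCongr (Equiv.refl _) (Sym.equivNatSumOfFintype (Fin 6) (n - 2 - (q:ℕ))).symm
  rw [Nat.card_congr e, Nat.card_eq_fintype_card, Fintype.card_sigma]
  simp only [Fintype.card_prod, Fintype.card_fin, card_sym6]
  rw [Fin.sum_univ_eq_sum_range (fun q => 999 * ((n - 2 - q) + 5).choose 5) (n-1),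
    ← Finset.mul_sum]
  have : ∀ q ∈ Finset.range (n-1), ((n - 2 - q) + 5).choose 5 = ((n - 1 - 1 - q) + 5).choose 5 := by
    intro q hq
    have e : n - 2 - q = n - 1 - 1 - q := by omega
    rw [e]
  rw [Finset.sum_congr rfl this, sum_reflect5]
  have e : n - 1 + 5 = n + 4 := by omega
  rw [e]

lemma choose6_cast (k : ℕ) :
    (((k + 5).choose 6 : ℕ) : ℚ) =
      (k:ℚ) * (k+1) * (k+2) * (k+3) * (k+4) * (k+5) / 720 := by
  have h := Nat.descFactorial_eq_factorial_mul_choose (k+5) 6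
  have hd : (k+5).descFactorial 6 = ((k+5)-5) * (((k+5)-4) * (((k+5)-3) * (((k+5)-2) *
      (((k+5)-1) * (((k+5)-0) * 1))))) := by
    simp [Nat.descFactorial_succ, Nat.descFactorial_zero, Nat.mul_comm, Nat.mul_assoc,
      Nat.mul_left_comm]
  have s5 : k+5-5 = k := by omega
  have s4 : k+5-4 = k+1 := by omega
  have s3 : k+5-3 = k+2 := by omega
  have s2 : k+5-2 = k+3 := by omega
  have s1 : k+5-1 = k+4 := by omega
  rw [s5, s4, s3, s2, s1, Nat.sub_zero] at hd
  have hfac : Nat.factorial 6 = 720 := by decide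
  rw [hfac, hd] at h
  have h' : ((k * ((k+1) * ((k+2) * ((k+3) * ((k+4) * ((k+5) * 1)))))) : ℚ)
      = 720 * ((k+5).choose 6 : ℕ) := by exact_mod_cast congrArg (Nat.cast : ℕ → ℚ) h
  push_cast at h'
  linarith

instance ZS.finite (M : ℕ) : Finite (ZS M) :=
  Finite.of_equiv _ (Sym.equivNatSumOfFintype (Fin 6) M)

lemma card_good (n : ℕ) (hn : 0 < n) :
    Nat.card {x : Fin 6 → ℤ | good n x} = (n+6).choose 6 + 999 * (n+4).choose 6 := by
  have hg : Function.Bijective (fun ω : OmA n ⊕ OmB n =>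
      (⟨fF n ω, good_fF n ω⟩ : {x : Fin 6 → ℤ | good n x})) := by
    constructor
    · intro a b hab
      exact fF_inj n (congrArg Subtype.val hab)
    · rintro ⟨x, hx⟩
      obtain ⟨ω, hω⟩ := fF_surj n hn x hx
      exact ⟨ω, Subtype.ext hω⟩
  rw [← Nat.card_eq_of_bijective _ hg, Nat.card_sum, card_OmA, card_OmB n hn]

theorem ehrhart_of_P6_12 (n : ℕ) (hn : 0 < n) :
    (Set.ncard {x : Fin 6 → ℤ | (fun i => (x i : ℝ)) ∈
        (n : ℝ) • convexHull ℝ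
          ({![0, 0, 0, 0, 0, 0], ![1, 0, 0, 0, 0, 0], ![0, 1, 0, 0, 0, 0],
            ![0, 0, 1, 0, 0, 0], ![0, 0, 0, 1, 0, 0], ![0, 0, 0, 0, 1, 0],
            ![1, 1, 0, 0, 999, 1000]} : Set (Fin 6 → ℝ))} : ℚ)
      = 25 / 18 * n ^ 6 + 751 / 60 * n ^ 5 + 2515 / 72 * n ^ 4 + 131 / 6 * n ^ 3
        - 2435 / 72 * n ^ 2 - 617 / 20 * n + 1 := by
  have hset : {x : Fin 6 → ℤ | (fun i => (x i : ℝ)) ∈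
        (n : ℝ) • convexHull ℝ
          ({![0, 0, 0, 0, 0, 0], ![1, 0, 0, 0, 0, 0], ![0, 1, 0, 0, 0, 0],
            ![0, 0, 1, 0, 0, 0], ![0, 0, 0, 1, 0, 0], ![0, 0, 0, 0, 1, 0],
            ![1, 1, 0, 0, 999, 1000]} : Set (Fin 6 → ℝ))} = {x : Fin 6 → ℤ | good n x} :=
    Set.ext fun x => mem_iff n hn x
  rw [hset, ← Nat.card_coe_set_eq, card_good n hn]
  have h1 := choose6_cast (n+1)
  have e1 : n+1+5 = n+6 := by omega
  rw [e1] at h1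
  have h2 := choose6_cast (n-1)
  have e2 : n-1+5 = n+4 := by omega
  rw [e2, Nat.cast_sub (by omega : 1 ≤ n)] at h2
  push_cast at h1 h2 ⊢
  rw [h1, h2]
  ring
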